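/- (Optimal ℓ∞ shift) Let x ∈ ℝ_max^n with A ⊞ x ≤ b componentwise and let δ = ‖b - A⊞x‖_∞ = max_i (b_i - [A⊞x]_i) be finite. Define x* = x + δ/2 (adding δ/2 to each finite component). Then ‖b - A⊞x*‖_∞ = δ/2, and for every z ∈ ℝ_max^n with supp(z) = supp(x), ‖b - A⊞z‖_∞ ≥ δ/2. -/

import Mathlib

/-- Max-plus matrix-vector product over ℝ_max = WithBot ℝ:
`[A ⊞ x]_i = max_k (a_{ik} + x_k)` with the convention `a + (-∞) = -∞`. -/
noncomputable def maxPlus {m n : ℕ} (A : Fin m → Fin n → ℝ) (x : Fin n → WithBot ℝ)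
    (i : Fin m) : WithBot ℝ :=
  Finset.univ.sup fun k => (A i k : WithBot ℝ) + x k

/-- The principal solution `x̂_j = min_i (b_i - a_{ij})`. -/
noncomputable def principalSol {m n : ℕ} (A : Fin (m + 1) → Fin n → ℝ)
    (b : Fin (m + 1) → ℝ) (j : Fin n) : ℝ :=
  Finset.univ.inf' Finset.univ_nonempty fun i => b i - A i j

lemma maxPlus_supp' {m n : ℕ} (A : Fin m → Fin n → ℝ) (z : Fin n → WithBot ℝ)
    (T : Finset (Fin n)) (hT : T.Nonempty) (hz : ∀ j, z j = ⊥ ↔ j ∉ T) (i : Fin m) :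
    maxPlus A z i = ((T.sup' hT fun k => A i k + WithBot.unbotD 0 (z k) : ℝ) : WithBot ℝ) := by
  unfold maxPlus
  apply le_antisymm
  · apply Finset.sup_le
    intro k _
    by_cases hk : k ∈ T
    · have hne : z k ≠ ⊥ := fun h => (hz k).mp h hk
      obtain ⟨r, hr⟩ := WithBot.ne_bot_iff_exists.mp hne
      rw [← hr, ← WithBot.coe_add, WithBot.coe_le_coe]
      have := Finset.le_sup' (fun k => A i k + WithBot.unbotD 0 (z k)) hk
      rw [← hr, WithBot.unbotD_coe] at this; exact this
    · rw [(hz k).mpr hk]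
      simp
  · obtain ⟨k0, hk0, h0⟩ := Finset.exists_mem_eq_sup' hT (fun k => A i k + WithBot.unbotD 0 (z k))
    rw [h0]
    have hne : z k0 ≠ ⊥ := fun h => (hz k0).mp h hk0
    obtain ⟨r, hr⟩ := WithBot.ne_bot_iff_exists.mp hne
    have : ((A i k0 + WithBot.unbotD 0 (z k0) : ℝ) : WithBot ℝ) = ↑(A i k0) + z k0 := by
      rw [← hr]; simp [WithBot.coe_add]
    rw [this]
    exact Finset.le_sup (f := fun k => ((A i k : ℝ) : WithBot ℝ) + z k) (Finset.mem_univ k0)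

lemma sup'_add_const {n : ℕ} (T : Finset (Fin n)) (hT : T.Nonempty) (g : Fin n → ℝ) (c : ℝ) :
    (T.sup' hT fun k => g k + c) = T.sup' hT g + c := by
  apply le_antisymm
  · exact Finset.sup'_le hT (fun k => g k + c) fun k hk => add_le_add_left (Finset.le_sup' g hk) c
  · obtain ⟨k0, hk0, h0⟩ := Finset.exists_mem_eq_sup' hT g
    rw [h0]
    exact Finset.le_sup' (fun k => g k + c) hk0

/-- Optimal ℓ∞ shift: if `x` is the principal solution restricted to a nonempty
support `T` and `δ = max_i (b_i - [A⊞x]_i)`, then `x* = x + δ/2` has ℓ∞ error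
exactly `δ/2`, and every vector with the same support has ℓ∞ error at least `δ/2`. -/
theorem optimal_linf_shift (m n : ℕ) (A : Fin (m + 1) → Fin (n + 1) → ℝ)
    (b : Fin (m + 1) → ℝ) (T : Finset (Fin (n + 1))) (hT : T.Nonempty) :
    ∀ x : Fin (n + 1) → WithBot ℝ,
      x = (fun j => if j ∈ T then ((principalSol A b j : ℝ) : WithBot ℝ) else ⊥) →
    ∀ δ : ℝ,
      δ = Finset.univ.sup' Finset.univ_nonempty (fun i => b i - WithBot.unbotD 0 (maxPlus A x i)) →
    (Finset.univ.sup' Finset.univ_nonempty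
        (fun i => |b i - WithBot.unbotD 0 (maxPlus A (fun j => x j + ((δ / 2 : ℝ) : WithBot ℝ)) i)|)
      = δ / 2) ∧
    ∀ z : Fin (n + 1) → WithBot ℝ, {j | z j ≠ ⊥} = {j | x j ≠ ⊥} →
      δ / 2 ≤ Finset.univ.sup' Finset.univ_nonempty
        (fun i => |b i - WithBot.unbotD 0 (maxPlus A z i)|) := by
  intro x hx δ hδ
  set xh := principalSol A b with hxh
  -- support of x
  have hxs : ∀ j, x j = ⊥ ↔ j ∉ T := by
    intro j; subst hx; by_cases hj : j ∈ T <;> simp [hj]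
  have hxval : ∀ j ∈ T, WithBot.unbotD 0 (x j) = xh j := by
    intro j hj; subst hx; simp [hj, hxh]
  -- real version of A ⊞ x
  set f : Fin (m + 1) → ℝ := fun i => T.sup' hT fun k => A i k + xh k with hf
  have hmx : ∀ i, maxPlus A x i = ((f i : ℝ) : WithBot ℝ) := by
    intro i
    rw [maxPlus_supp' A x T hT hxs i]
    congr 1
    exact Finset.sup'_congr hT rfl fun k hk => by rw [hxval k hk]
  have hδ' : δ = Finset.univ.sup' Finset.univ_nonempty (fun i => b i - f i) := by
    rw [hδ]; exact Finset.sup'_congr _ rfl fun i _ => by rw [hmx i]; rfl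
  -- basic facts
  have hfb : ∀ i, f i ≤ b i := by
    intro i
    apply Finset.sup'_le
    intro k hk
    have h1 : xh k ≤ b i - A i k :=
      Finset.inf'_le (fun i => b i - A i k) (Finset.mem_univ i)
    linarith
  have hδub : ∀ i, b i - f i ≤ δ := by
    intro i; rw [hδ']
    exact Finset.le_sup' (fun i => b i - f i) (Finset.mem_univ i)
  obtain ⟨i1, _, hi1⟩ := Finset.exists_mem_eq_sup' (Finset.univ_nonempty
    (α := Fin (m + 1))) (fun i => b i - f i)
  rw [← hδ'] at hi1
  have hδ0 : 0 ≤ δ := by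
    obtain ⟨k0, hk0⟩ := hT
    obtain ⟨i0, _, hi0⟩ := Finset.exists_mem_eq_inf' (Finset.univ_nonempty
      (α := Fin (m + 1))) (fun i => b i - A i k0)
    have h1 : A i0 k0 + xh k0 ≤ f i0 := Finset.le_sup' (fun k => A i0 k + xh k) hk0
    have h2 : xh k0 = b i0 - A i0 k0 := hi0
    have h3 : b i0 - f i0 ≤ δ := hδub i0
    have h4 : f i0 ≤ b i0 := hfb i0
    linarith
  constructor
  · -- Part 1
    set xs : Fin (n + 1) → WithBot ℝ := fun j => x j + ((δ / 2 : ℝ) : WithBot ℝ) with hxsdef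
    have hxss : ∀ j, xs j = ⊥ ↔ j ∉ T := by
      intro j
      by_cases hj : j ∈ T
      · have hne : x j ≠ ⊥ := fun h => (hxs j).mp h hj
        obtain ⟨r, hr⟩ := WithBot.ne_bot_iff_exists.mp hne
        simp [hxsdef, ← hr, ← WithBot.coe_add, hj]
      · simp [hxsdef, (hxs j).mpr hj, hj]
    have hmxs : ∀ i, maxPlus A xs i = ((f i + δ / 2 : ℝ) : WithBot ℝ) := by
      intro i
      rw [maxPlus_supp' A xs T hT hxss i]
      congr 1
      have : (T.sup' hT fun k => A i k + WithBot.unbotD 0 (xs k))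
          = T.sup' hT fun k => (A i k + xh k) + δ / 2 := by
        apply Finset.sup'_congr hT rfl
        intro k hk
        have hne : x k ≠ ⊥ := fun h => (hxs k).mp h hk
        obtain ⟨r, hr⟩ := WithBot.ne_bot_iff_exists.mp hne
        have hrv : r = xh k := by
          have := hxval k hk; rw [← hr] at this; simpa using this
        simp [hxsdef, ← hr, ← WithBot.coe_add, hrv, add_assoc]
      rw [this, sup'_add_const]
    apply le_antisymm
    · apply Finset.sup'_le
      intro i _
      rw [hmxs i]
      have h1 := hfb i
      have h2 := hδub i
      rw [abs_le]
      constructor <;> simp only [WithBot.unbotD_coe] <;> linarith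
    · have : |b i1 - WithBot.unbotD 0 (maxPlus A xs i1)| = δ / 2 := by
        rw [hmxs i1]
        simp only [WithBot.unbotD_coe]
        have h : b i1 - (f i1 + δ / 2) = δ / 2 := by linarith
        rw [h, abs_of_nonneg (by linarith)]
      rw [← this]
      exact Finset.le_sup' (fun i => |b i - WithBot.unbotD 0 (maxPlus A xs i)|) (Finset.mem_univ i1)
  · -- Part 2
    intro z hzsupp
    have hzs : ∀ j, z j = ⊥ ↔ j ∉ T := by
      intro j
      have h1 : z j ≠ ⊥ ↔ x j ≠ ⊥ := by
        have := Set.ext_iff.mp hzsupp j; simpa using this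
      have h2 : z j = ⊥ ↔ x j = ⊥ := not_iff_not.mp h1
      rw [h2]; exact hxs j
    set g : Fin (m + 1) → ℝ := fun i => T.sup' hT fun k => A i k + WithBot.unbotD 0 (z k) with hg
    have hmz : ∀ i, maxPlus A z i = ((g i : ℝ) : WithBot ℝ) := fun i =>
      maxPlus_supp' A z T hT hzs i
    set ε : ℝ := Finset.univ.sup' Finset.univ_nonempty (fun i => |b i - g i|) with hε
    have hgoal : Finset.univ.sup' Finset.univ_nonempty
        (fun i => |b i - WithBot.unbotD 0 (maxPlus A z i)|) = ε := by
      rw [hε]; exact Finset.sup'_congr _ rfl fun i _ => by rw [hmz i]; rfl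
    rw [hgoal]
    have hεub : ∀ i, |b i - g i| ≤ ε := fun i =>
      Finset.le_sup' (fun i => |b i - g i|) (Finset.mem_univ i)
    have hgb : ∀ i, g i ≤ b i + ε := by
      intro i
      have h1 : -ε ≤ b i - g i := neg_le_of_abs_le (hεub i)
      linarith
    have hzx : ∀ k ∈ T, WithBot.unbotD 0 (z k) ≤ xh k + ε := by
      intro k hk
      have h1 : WithBot.unbotD 0 (z k) - ε ≤ xh k := by
        apply Finset.le_inf'
        intro i _
        have h2 : A i k + WithBot.unbotD 0 (z k) ≤ g i :=
          Finset.le_sup' (fun k => A i k + WithBot.unbotD 0 (z k)) hk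
        have h3 := hgb i
        linarith
      linarith
    have hgf : ∀ i, g i ≤ f i + ε := by
      intro i
      apply Finset.sup'_le
      intro k hk
      have h1 := hzx k hk
      have h2 : A i k + xh k ≤ f i := Finset.le_sup' (fun k => A i k + xh k) hk
      linarith
    have h5 : b i1 - g i1 ≤ |b i1 - g i1| := le_abs_self _
    have h6 := hεub i1
    have h7 := hgf i1
    linarith
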